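/- Uniqueness of Chebyshev series: if (a_k) and (b_k) are real sequences with ∑_{k=0}^∞ |a_k| < ∞ and ∑_{k=0}^∞ |b_k| < ∞, and ∑_{k=0}^∞ a_k T_k(x) = ∑_{k=0}^∞ b_k T_k(x) for every x ∈ [-1,1], then a_k = b_k for every k ≥ 0. -/

import Mathlib

open Polynomial MeasureTheory Real

private lemma intJ (m : ℤ) :
    ∫ θ in (0:ℝ)..π, Real.cos (m * θ) = if m = 0 then π else 0 := by
  rcases eq_or_ne m 0 with hm | hm
  · simp [hm]
  · have hm' : (m : ℝ) ≠ 0 := Int.cast_ne_zero.mpr hm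
    rw [if_neg hm, intervalIntegral.integral_comp_mul_left Real.cos hm']
    simp [integral_cos, Real.sin_int_mul_pi]

private lemma intI (k n : ℕ) :
    ∫ θ in (0:ℝ)..π, Real.cos (k * θ) * Real.cos (n * θ) =
      (if (k:ℤ) - n = 0 then π else 0) / 2 + (if (k:ℤ) + n = 0 then π else 0) / 2 := by
  have hptw : ∀ θ : ℝ, Real.cos (k * θ) * Real.cos (n * θ) =
      Real.cos ((((k:ℤ) - n : ℤ) : ℝ) * θ) / 2 + Real.cos ((((k:ℤ) + n : ℤ) : ℝ) * θ) / 2 := by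
    intro θ
    push_cast
    rw [sub_mul, add_mul, Real.cos_sub, Real.cos_add]
    ring
  have hcont : ∀ m : ℤ, Continuous fun θ : ℝ => Real.cos (m * θ) / 2 :=
    fun m => (Real.continuous_cos.comp (continuous_const.mul continuous_id)).div_const 2
  rw [intervalIntegral.integral_congr (g := fun θ =>
      Real.cos ((((k:ℤ) - n : ℤ) : ℝ) * θ) / 2 + Real.cos ((((k:ℤ) + n : ℤ) : ℝ) * θ) / 2)
      (fun θ _ => hptw θ),
    intervalIntegral.integral_add ((hcont _).intervalIntegrable _ _)
      ((hcont _).intervalIntegrable _ _)]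
  simp_rw [intervalIntegral.integral_div]
  rw [intJ, intJ]

/-- **Uniqueness of Chebyshev series.** If two absolutely summable coefficient sequences
give the same Chebyshev series on `[-1,1]`, the coefficients agree. -/
theorem chebyshev_series_unique
    (a b : ℕ → ℝ)
    (ha : Summable (fun k : ℕ => |a k|))
    (hb : Summable (fun k : ℕ => |b k|))
    (h : ∀ x ∈ Set.Icc (-1 : ℝ) 1,
      (∑' k : ℕ, a k * (Chebyshev.T ℝ (k : ℤ)).eval x) =
        ∑' k : ℕ, b k * (Chebyshev.T ℝ (k : ℤ)).eval x) :
    ∀ k : ℕ, a k = b k := by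
  set c : ℕ → ℝ := fun k => a k - b k with hc_def
  have hc : Summable fun k => |c k| := by
    refine (ha.add hb).of_nonneg_of_le (fun k => abs_nonneg _) (fun k => ?_)
    simpa [hc_def, sub_eq_add_neg] using (abs_add_le (a k) (-(b k))).trans (by rw [abs_neg])
  -- the difference series vanishes pointwise in θ
  have hzero : ∀ θ : ℝ, (∑' k : ℕ, c k * Real.cos (k * θ)) = 0 := by
    intro θ
    have hT : ∀ k : ℕ, (Chebyshev.T ℝ (k : ℤ)).eval (Real.cos θ) = Real.cos (k * θ) := by
      intro k
      have := Polynomial.Chebyshev.T_real_cos θ (k : ℤ)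
      push_cast at this ⊢
      exact this
    have hsa : Summable fun k : ℕ => a k * Real.cos (k * θ) := by
      refine Summable.of_norm_bounded ha (fun k => ?_)
      rw [norm_mul]
      calc ‖a k‖ * ‖Real.cos (k * θ)‖ ≤ ‖a k‖ * 1 := by
            gcongr; exact (Real.abs_cos_le_one _)
        _ = |a k| := by simp
    have hsb : Summable fun k : ℕ => b k * Real.cos (k * θ) := by
      refine Summable.of_norm_bounded hb (fun k => ?_)
      rw [norm_mul]
      calc ‖b k‖ * ‖Real.cos (k * θ)‖ ≤ ‖b k‖ * 1 := by
            gcongr; exact (Real.abs_cos_le_one _)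
        _ = |b k| := by simp
    have hx : Real.cos θ ∈ Set.Icc (-1:ℝ) 1 := ⟨Real.neg_one_le_cos θ, Real.cos_le_one θ⟩
    have h' := h (Real.cos θ) hx
    simp_rw [hT] at h'
    simp_rw [hc_def, sub_mul]
    rw [Summable.tsum_sub hsa hsb, h', sub_self]
  -- now fix n and integrate against cos (n θ)
  intro n
  set μ := volume.restrict (Set.Ioc (0:ℝ) π) with hμ
  set F : ℕ → ℝ → ℝ := fun k θ => c k * Real.cos (k * θ) * Real.cos (n * θ) with hF
  have hFcont : ∀ k, Continuous (F k) := by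
    intro k
    exact (continuous_const.mul
      (Real.continuous_cos.comp (continuous_const.mul continuous_id))).mul
      (Real.continuous_cos.comp (continuous_const.mul continuous_id))
  have hint : ∀ k, Integrable (F k) μ := fun k => (hFcont k).integrableOn_Ioc
  have hbound : ∀ k, (∫ θ, ‖F k θ‖ ∂μ) ≤ |c k| * π := by
    intro k
    have hle : ∀ θ, ‖F k θ‖ ≤ |c k| := by
      intro θ
      rw [hF]
      simp only [norm_mul, Real.norm_eq_abs]
      calc |c k| * |Real.cos (k*θ)| * |Real.cos (n*θ)| ≤ |c k| * 1 * 1 := by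
            gcongr <;> exact Real.abs_cos_le_one _
        _ = |c k| := by ring
    calc (∫ θ, ‖F k θ‖ ∂μ) ≤ ∫ _, |c k| ∂μ :=
          integral_mono (hint k).norm (integrable_const _) hle
      _ = |c k| * π := by
          rw [integral_const]
          simp [hμ, Real.volume_Ioc, ENNReal.toReal_ofReal Real.pi_pos.le, mul_comm]
          rw [max_eq_left Real.pi_pos.le, mul_comm]
  have hnorm : Summable fun k => ∫ θ, ‖F k θ‖ ∂μ :=
    Summable.of_nonneg_of_le (fun k => integral_nonneg (fun θ => norm_nonneg _))
      hbound (hc.mul_right π)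
  have key : HasSum (fun k => ∫ θ, F k θ ∂μ) (∫ θ, (∑' k, F k θ) ∂μ) :=
    hasSum_integral_of_summable_integral_norm hint hnorm
  have htsumF : ∀ θ, (∑' k, F k θ) = 0 := by
    intro θ
    rw [hF]
    simp only
    rw [tsum_mul_right, hzero θ, zero_mul]
  rw [show (∫ θ, (∑' k, F k θ) ∂μ) = 0 by simp [htsumF]] at key
  -- evaluate each integral
  have hval : ∀ k, (∫ θ, F k θ ∂μ) = c k *
      ((if (k:ℤ) - n = 0 then π else 0) / 2 + (if (k:ℤ) + n = 0 then π else 0) / 2) := by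
    intro k
    rw [hμ, ← intervalIntegral.integral_of_le Real.pi_pos.le]
    rw [hF]
    simp_rw [mul_assoc]
    rw [intervalIntegral.integral_const_mul, intI]
  simp_rw [hval] at key
  have hsingle : HasSum
      (fun k => c k * ((if (k:ℤ) - n = 0 then π else 0) / 2 +
        (if (k:ℤ) + n = 0 then π else 0) / 2))
      (c n * ((if (n:ℤ) - n = 0 then π else 0) / 2 +
        (if (n:ℤ) + n = 0 then π else 0) / 2)) := by
    refine hasSum_single n (fun k hk => ?_)
    have h1 : (k:ℤ) - n ≠ 0 := by
      intro hkn; exact hk (by exact_mod_cast sub_eq_zero.mp hkn)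
    have h2 : (k:ℤ) + n ≠ 0 := by
      intro hkn
      have hk0 : k = 0 ∧ n = 0 := by omega
      exact hk (hk0.1.trans hk0.2.symm)
    rw [if_neg h1, if_neg h2]
    ring
  have heq := key.unique hsingle
  have hpos : (0:ℝ) < (if (n:ℤ) - n = 0 then π else 0) / 2 +
      (if (n:ℤ) + n = 0 then π else 0) / 2 := by
    rw [if_pos (by ring)]
    have : (0:ℝ) ≤ (if (n:ℤ) + n = 0 then π else 0) / 2 := by
      split <;> simp [Real.pi_pos.le, le_div_iff₀]
    linarith [Real.pi_pos]
  have hcn : c n = 0 := by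
    rcases mul_eq_zero.mp heq.symm with h' | h'
    · exact h'
    · exact absurd h' hpos.ne'
  exact sub_eq_zero.mp hcn
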